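/- Every J-circuit produced by the greedy procedure is undominated with respect to (J_+, J_−): if for some ordering j_1,...,j_m of J one assigns to each x_{j_i} in turn the smallest (if j_i ∈ J_+) or largest (if j_i ∈ J_−) still-available value that creates no cycle, then the resulting J-circuit is not dominated by any other J-circuit. -/

import Mathlib

/-- The partial assignment `f` on `J` creates no cycle. -/
def NoCycleOn {n : ℕ} (f : Fin n → Fin n) (J : Finset (Fin n)) : Prop :=
  ¬ ∃ j ∈ J, ∃ k, 0 < k ∧ (∀ t < k, f^[t] j ∈ J) ∧ f^[k] j = j

/-- A `J`-circuit: an injective, cycle-free partial assignment on `J`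
(index `j` receives value `v_{f j}`). -/
def IsJCircuit {n : ℕ} (J : Finset (Fin n)) (f : Fin n → Fin n) : Prop :=
  Set.InjOn f J ∧ NoCycleOn f J

lemma iterate_congr_aux {n : ℕ} (f g : Fin n → Fin n) (S : Set (Fin n))
    (h : Set.EqOn f g S) (j : Fin n) (k : ℕ) (hk : ∀ t < k, f^[t] j ∈ S) :
    ∀ t ≤ k, f^[t] j = g^[t] j := by
  intro t ht
  induction t with
  | zero => simp
  | succ t ih =>
    rw [Function.iterate_succ_apply', Function.iterate_succ_apply',
      ← ih (Nat.le_of_succ_le ht)]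
    exact h (hk t (Nat.lt_of_succ_le ht))

lemma isJCircuit_congr {n : ℕ} {f g : Fin n → Fin n} {J : Finset (Fin n)}
    (h : Set.EqOn f g (J : Set (Fin n))) (hf : IsJCircuit J f) : IsJCircuit J g := by
  obtain ⟨hinj, hnc⟩ := hf
  constructor
  · intro a ha b hb hab
    exact hinj ha hb (by rw [h ha, h hb]; exact hab)
  · rintro ⟨j, hj, k, hk0, hmem, heq⟩
    refine hnc ⟨j, hj, k, hk0, ?_, ?_⟩
    · intro t ht
      have := iterate_congr_aux g f (J : Set (Fin n)) h.symm j k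
        (fun t ht => hmem t ht) t ht.le
      rw [← this] at *
      exact hmem t ht
    · have := iterate_congr_aux g f (J : Set (Fin n)) h.symm j k
        (fun t ht => hmem t ht) k le_rfl
      rw [← this]; exact heq

lemma isJCircuit_mono {n : ℕ} {f : Fin n → Fin n} {S J : Finset (Fin n)} (hS : S ⊆ J)
    (hf : IsJCircuit J f) : IsJCircuit S f := by
  obtain ⟨hinj, hnc⟩ := hf
  refine ⟨hinj.mono (by exact_mod_cast hS), ?_⟩
  rintro ⟨j, hj, k, hk0, hmem, heq⟩
  exact hnc ⟨j, hS hj, k, hk0, fun t ht => hS (hmem t ht), heq⟩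

/-- `g` dominates `f` with respect to the partition `(J₊, J₋)`. -/
def Dominates {n : ℕ} (v : Fin n → ℝ) (Jp Jm : Finset (Fin n)) (g f : Fin n → Fin n) : Prop :=
  (∃ j ∈ Jp ∪ Jm, g j ≠ f j) ∧ (∀ j ∈ Jp, v (g j) ≤ v (f j)) ∧ (∀ j ∈ Jm, v (f j) ≤ v (g j))

/-- `f` is the greedy assignment with respect to the ordering `l` of `J = J₊ ∪ J₋`:
at each step `i`, the value assigned to index `l.get i` is the smallest (if in `J₊`)
or largest (if in `J₋`) value for which the partial assignment on the prefix of `l`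
up to position `i` remains an injective, cycle-free `J'`-circuit. -/
def GreedyWrt {n : ℕ} (v : Fin n → ℝ) (Jp Jm : Finset (Fin n)) (l : List (Fin n))
    (f : Fin n → Fin n) : Prop :=
  ∀ i : Fin l.length,
    (l.get i ∈ Jp →
      IsLeast (v '' {k : Fin n |
        IsJCircuit (l.take (i.1 + 1)).toFinset (Function.update f (l.get i) k)})
        (v (f (l.get i)))) ∧
    (l.get i ∈ Jm →
      IsGreatest (v '' {k : Fin n |
        IsJCircuit (l.take (i.1 + 1)).toFinset (Function.update f (l.get i) k)})
        (v (f (l.get i))))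

/-- Every `J`-circuit produced by the greedy procedure (for any ordering of `J`)
is undominated with respect to `(J₊, J₋)`. -/
theorem stmt_6 (n : ℕ) (v : Fin n → ℝ) (hv : StrictMono v)
    (Jp Jm : Finset (Fin n)) (hdisj : Disjoint Jp Jm)
    (l : List (Fin n)) (hnd : l.Nodup) (hl : l.toFinset = Jp ∪ Jm)
    (f : Fin n → Fin n) (hf : IsJCircuit (Jp ∪ Jm) f)
    (hgreedy : GreedyWrt v Jp Jm l f) :
    ¬ ∃ g : Fin n → Fin n, IsJCircuit (Jp ∪ Jm) g ∧ Dominates v Jp Jm g f := by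
  classical
  rintro ⟨g, hg, ⟨j0, hj0, hne0⟩, hp, hm⟩
  have hj0l : j0 ∈ l := by rw [← List.mem_toFinset, hl]; exact hj0
  obtain ⟨i0, hi0⟩ := List.get_of_mem hj0l
  have hP : ∃ t, ∃ h : t < l.length, g (l.get ⟨t, h⟩) ≠ f (l.get ⟨t, h⟩) :=
    ⟨i0.1, i0.2, by
      have : l.get ⟨i0.1, i0.2⟩ = j0 := by rw [← hi0]
      rw [this]; exact hne0⟩
  obtain ⟨ht0, hne⟩ := Nat.find_spec hP
  set t0 := Nat.find hP with ht0def
  have hmin : ∀ t (h : t < l.length), t < t0 → g (l.get ⟨t, h⟩) = f (l.get ⟨t, h⟩) := by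
    intro t h hlt
    by_contra hc
    exact Nat.find_min hP hlt ⟨h, hc⟩
  set i : Fin l.length := ⟨t0, ht0⟩ with hidef
  set j := l.get i with hjdef
  set S := (l.take (t0 + 1)).toFinset with hSdef
  -- every element of S is l.get t for some t ≤ t0
  have hSmem : ∀ x ∈ S, ∃ t : ℕ, ∃ h : t < l.length, t ≤ t0 ∧ l.get ⟨t, h⟩ = x := by
    intro x hx
    rw [hSdef, List.mem_toFinset] at hx
    obtain ⟨⟨t, ht⟩, hxe⟩ := List.get_of_mem hx
    have ht' : t < l.length := lt_of_lt_of_le ht (by simp [List.length_take])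
    refine ⟨t, ht', ?_, ?_⟩
    · have : t < t0 + 1 := lt_of_lt_of_le ht (by simp [List.length_take])
      omega
    · rw [← hxe]
      simp [List.getElem_take]
  have hSsub : S ⊆ Jp ∪ Jm := by
    rw [← hl]
    intro x hx
    rw [hSdef, List.mem_toFinset] at hx
    rw [List.mem_toFinset]
    exact List.mem_of_mem_take hx
  have hjS : j ∈ S := by
    rw [hSdef, List.mem_toFinset]
    have : l.get i ∈ l.take (t0 + 1) := by
      rw [List.mem_iff_get]
      have hlen : t0 < (l.take (t0 + 1)).length := by
        simp [List.length_take]; omega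
      exact ⟨⟨t0, hlen⟩, by simp [List.getElem_take, hidef]⟩
    exact this
  have heqOn : Set.EqOn g (Function.update f j (g j)) (S : Set (Fin n)) := by
    intro x hx
    obtain ⟨t, h, hle, hget⟩ := hSmem x hx
    by_cases hxj : x = j
    · rw [hxj, Function.update_self]
    · rw [Function.update_of_ne hxj]
      have htne : t ≠ t0 := by
        intro hcon
        apply hxj
        rw [← hget, hjdef, hidef]
        congr 1
        exact Fin.ext hcon
      rw [← hget]
      exact hmin t h (lt_of_le_of_ne hle htne)
  have hcirc : IsJCircuit S (Function.update f j (g j)) :=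
    isJCircuit_congr heqOn (isJCircuit_mono hSsub hg)
  have hjJ : j ∈ Jp ∪ Jm := by rw [← hl, List.mem_toFinset]; exact List.get_mem l i
  have hvmem : v (g j) ∈ v '' {k : Fin n |
      IsJCircuit (l.take (i.1 + 1)).toFinset (Function.update f (l.get i) k)} := by
    refine ⟨g j, ?_, rfl⟩
    show IsJCircuit (l.take (i.1 + 1)).toFinset (Function.update f (l.get i) (g j))
    exact hcirc
  have hgf : g j = f j := by
    rcases Finset.mem_union.mp hjJ with hjp | hjm
    · have h1 := ((hgreedy i).1 hjp).2 hvmem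
      have h2 := hp j hjp
      exact hv.injective (le_antisymm h2 h1)
    · have h1 := ((hgreedy i).2 hjm).2 hvmem
      have h2 := hm j hjm
      exact hv.injective (le_antisymm h1 h2)
  exact hne hgf
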